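/- Let a, b ∈ ℝ^d with aᵢ < bᵢ for all i, let Ω = ∏ᵢ (aᵢ, bᵢ) be the open box and K = ∏ᵢ [aᵢ, bᵢ] the closed box. Let α, β > 0, let c : ℝ → ℝ be continuous with c ≥ 0, and let d : ℝ → ℝ be continuously differentiable. Let U be an open set containing K and let S : ℝ × U → ℝ be twice continuously differentiable (jointly in (t,x)), satisfying c(|∇ₓS(t,x)|) ∂_t S(t,x) = α ΔₓS(t,x) − β d'(S(t,x)) for all t ∈ ℝ and x ∈ K, and the Neumann condition ∂ᵢS(t,x) = 0 whenever x ∈ K satisfies xᵢ = aᵢ or xᵢ = bᵢ. Then t ↦ E(S(t,·)) is differentiable with derivative d/dt E(S(t,·)) = − ∫_Ω c(|∇ₓS(t,x)|) |∂_t S(t,x)|² dx ≤ 0; in particular the energy is nonincreasing in t. -/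

import Mathlib

open MeasureTheory Set
open scoped RealInnerProductSpace

/-- The Laplacian of a function on Euclidean space, as the sum of the second
partial derivatives in the coordinate directions. -/
noncomputable def laplacian {n : ℕ} (f : EuclideanSpace ℝ (Fin n) → ℝ)
    (x : EuclideanSpace ℝ (Fin n)) : ℝ :=
  ∑ i, fderiv ℝ (fun y => fderiv ℝ f y (EuclideanSpace.single i 1)) x (EuclideanSpace.single i 1)

/-- The free energy `E(S) = ∫_Ω (α/2)|∇S|² + β d(S) dx`. -/
noncomputable def energy {n : ℕ} (Ω : Set (EuclideanSpace ℝ (Fin n))) (α β : ℝ)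
    (d : ℝ → ℝ) (S : EuclideanSpace ℝ (Fin n) → ℝ) : ℝ :=
  ∫ x in Ω, (α / 2 * ‖gradient S x‖ ^ 2 + β * d (S x))

section AuxEnergyDecay

variable {n : ℕ}

/-- The embedding `E →L ℝ × E`, `w ↦ (0, w)`. -/
noncomputable def zprodAux (n : ℕ) : EuclideanSpace ℝ (Fin n) →L[ℝ] ℝ × EuclideanSpace ℝ (Fin n) :=
  (0 : EuclideanSpace ℝ (Fin n) →L[ℝ] ℝ).prod (ContinuousLinearMap.id ℝ _)

theorem zprodAux_apply (w : EuclideanSpace ℝ (Fin n)) : zprodAux n w = (0, w) := rfl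

theorem auxL1 {U : Set (EuclideanSpace ℝ (Fin n))} {S : ℝ → EuclideanSpace ℝ (Fin n) → ℝ}
    {Φ : ℝ × EuclideanSpace ℝ (Fin n) → (ℝ × EuclideanSpace ℝ (Fin n)) →L[ℝ] ℝ}
    (h1 : ∀ t, ∀ x ∈ U, HasFDerivAt (fun p : ℝ × EuclideanSpace ℝ (Fin n) => S p.1 p.2) (Φ (t, x)) (t, x))
    (t : ℝ) (x : EuclideanSpace ℝ (Fin n)) (hx : x ∈ U) :
    HasDerivAt (fun s => S s x) (Φ (t, x) (1, 0)) t := by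
  have := (h1 t x hx).comp_hasDerivAt t ((hasDerivAt_id t).prodMk (hasDerivAt_const t x))
  exact this

theorem auxL2 {U : Set (EuclideanSpace ℝ (Fin n))} {S : ℝ → EuclideanSpace ℝ (Fin n) → ℝ}
    {Φ : ℝ × EuclideanSpace ℝ (Fin n) → (ℝ × EuclideanSpace ℝ (Fin n)) →L[ℝ] ℝ}
    (h1 : ∀ t, ∀ x ∈ U, HasFDerivAt (fun p : ℝ × EuclideanSpace ℝ (Fin n) => S p.1 p.2) (Φ (t, x)) (t, x))
    (t : ℝ) (x : EuclideanSpace ℝ (Fin n)) (hx : x ∈ U) :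
    HasFDerivAt (S t) ((Φ (t, x)).comp (zprodAux n)) x := by
  have := (h1 t x hx).comp x ((hasFDerivAt_const t x).prodMk (hasFDerivAt_id x))
  exact this

theorem auxL3 {U : Set (EuclideanSpace ℝ (Fin n))}
    {Φ : ℝ × EuclideanSpace ℝ (Fin n) → (ℝ × EuclideanSpace ℝ (Fin n)) →L[ℝ] ℝ}
    {Ψ : ℝ × EuclideanSpace ℝ (Fin n) → (ℝ × EuclideanSpace ℝ (Fin n)) →L[ℝ] (ℝ × EuclideanSpace ℝ (Fin n)) →L[ℝ] ℝ}
    (h2 : ∀ t, ∀ x ∈ U, HasFDerivAt Φ (Ψ (t, x)) (t, x))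
    (t : ℝ) (x : EuclideanSpace ℝ (Fin n)) (hx : x ∈ U) :
    HasFDerivAt (fun y => Φ (t, y)) ((Ψ (t, x)).comp (zprodAux n)) x := by
  have := (h2 t x hx).comp x ((hasFDerivAt_const t x).prodMk (hasFDerivAt_id x))
  exact this

theorem auxL4 {U : Set (EuclideanSpace ℝ (Fin n))}
    {Φ : ℝ × EuclideanSpace ℝ (Fin n) → (ℝ × EuclideanSpace ℝ (Fin n)) →L[ℝ] ℝ}
    {Ψ : ℝ × EuclideanSpace ℝ (Fin n) → (ℝ × EuclideanSpace ℝ (Fin n)) →L[ℝ] (ℝ × EuclideanSpace ℝ (Fin n)) →L[ℝ] ℝ}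
    (h2 : ∀ t, ∀ x ∈ U, HasFDerivAt Φ (Ψ (t, x)) (t, x))
    (t : ℝ) (x : EuclideanSpace ℝ (Fin n)) (hx : x ∈ U) (v : ℝ × EuclideanSpace ℝ (Fin n)) :
    HasDerivAt (fun s => Φ (s, x) v) (Ψ (t, x) (1, 0) v) t := by
  have h := (h2 t x hx).comp_hasDerivAt t ((hasDerivAt_id t).prodMk (hasDerivAt_const t x))
  have h2' := h.clm_apply (hasDerivAt_const t v)
  simpa using h2'

theorem auxG1 {U : Set (EuclideanSpace ℝ (Fin n))} {S : ℝ → EuclideanSpace ℝ (Fin n) → ℝ}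
    {Φ : ℝ × EuclideanSpace ℝ (Fin n) → (ℝ × EuclideanSpace ℝ (Fin n)) →L[ℝ] ℝ}
    (h1 : ∀ t, ∀ x ∈ U, HasFDerivAt (fun p : ℝ × EuclideanSpace ℝ (Fin n) => S p.1 p.2) (Φ (t, x)) (t, x))
    (t : ℝ) (x : EuclideanSpace ℝ (Fin n)) (hx : x ∈ U) (i : Fin n) :
    gradient (S t) x i = Φ (t, x) (0, EuclideanSpace.single i 1) := by
  have hf : fderiv ℝ (S t) x = (Φ (t, x)).comp (zprodAux n) := (auxL2 h1 t x hx).fderiv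
  have hg : gradient (S t) x i = fderiv ℝ (S t) x (EuclideanSpace.single i 1) := by
    rw [gradient]
    rw [show ((InnerProductSpace.toDual ℝ (EuclideanSpace ℝ (Fin n))).symm (fderiv ℝ (S t) x)) i
      = ⟪(InnerProductSpace.toDual ℝ (EuclideanSpace ℝ (Fin n))).symm (fderiv ℝ (S t) x),
          EuclideanSpace.single i 1⟫ from ?_]
    · rw [← InnerProductSpace.toDual_apply_apply, LinearIsometryEquiv.apply_symm_apply]
    · rw [real_inner_comm, EuclideanSpace.inner_single_left]
      simp
  rw [hg, hf]
  rfl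

theorem auxNormSq (v : EuclideanSpace ℝ (Fin n)) : ‖v‖ ^ 2 = ∑ i, (v i) ^ 2 := by
  rw [EuclideanSpace.norm_eq, Real.sq_sqrt (by positivity)]
  simp [sq]

theorem auxG2 {U : Set (EuclideanSpace ℝ (Fin n))} (hU : IsOpen U)
    {S : ℝ → EuclideanSpace ℝ (Fin n) → ℝ}
    {Φ : ℝ × EuclideanSpace ℝ (Fin n) → (ℝ × EuclideanSpace ℝ (Fin n)) →L[ℝ] ℝ}
    {Ψ : ℝ × EuclideanSpace ℝ (Fin n) → (ℝ × EuclideanSpace ℝ (Fin n)) →L[ℝ] (ℝ × EuclideanSpace ℝ (Fin n)) →L[ℝ] ℝ}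
    (h1 : ∀ t, ∀ x ∈ U, HasFDerivAt (fun p : ℝ × EuclideanSpace ℝ (Fin n) => S p.1 p.2) (Φ (t, x)) (t, x))
    (h2 : ∀ t, ∀ x ∈ U, HasFDerivAt Φ (Ψ (t, x)) (t, x))
    (t : ℝ) (x : EuclideanSpace ℝ (Fin n)) (hx : x ∈ U) :
    (∑ i, fderiv ℝ (fun y => fderiv ℝ (S t) y (EuclideanSpace.single i 1)) x (EuclideanSpace.single i 1))
      = ∑ i, Ψ (t, x) (0, EuclideanSpace.single i 1) (0, EuclideanSpace.single i 1) := by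
  refine Finset.sum_congr rfl fun i _ => ?_
  have hev : (fun y => fderiv ℝ (S t) y (EuclideanSpace.single i 1))
      =ᶠ[nhds x] (fun y => Φ (t, y) (0, EuclideanSpace.single i 1)) := by
    filter_upwards [hU.mem_nhds hx] with y hy
    rw [(auxL2 h1 t y hy).fderiv]; rfl
  rw [hev.fderiv_eq]
  have h3 := (auxL3 h2 t x hx).clm_apply (hasFDerivAt_const (0, EuclideanSpace.single i 1) x)
  rw [h3.fderiv]
  simp [zprodAux]

end AuxEnergyDecay


/-- Divergence theorem on a box in Euclidean space, with vector field vanishing on the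
relevant faces. -/
theorem div_box {n : ℕ} (a b : Fin n → ℝ) (hab : ∀ i, a i < b i)
    (Ω : Set (EuclideanSpace ℝ (Fin n)))
    (hΩ : Ω = {x : EuclideanSpace ℝ (Fin n) | ∀ i, x i ∈ Ioo (a i) (b i)})
    (K : Set (EuclideanSpace ℝ (Fin n)))
    (hK : K = {x : EuclideanSpace ℝ (Fin n) | ∀ i, x i ∈ Icc (a i) (b i)})
    (U : Set (EuclideanSpace ℝ (Fin n))) (hU : IsOpen U) (hKU : K ⊆ U)
    (φ : Fin n → EuclideanSpace ℝ (Fin n) → ℝ)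
    (D : Fin n → EuclideanSpace ℝ (Fin n) → EuclideanSpace ℝ (Fin n) →L[ℝ] ℝ)
    (hφc : ∀ i, ContinuousOn (φ i) U)
    (hφd : ∀ i, ∀ x ∈ U, HasFDerivAt (φ i) (D i x) x)
    (hDc : ∀ i, ContinuousOn (fun x => D i x (EuclideanSpace.single i 1)) U)
    (hbd : ∀ x ∈ K, ∀ i, (x i = a i ∨ x i = b i) → φ i x = 0) :
    ∫ x in Ω, ∑ i, D i x (EuclideanSpace.single i 1) = 0 := by
  cases n with
  | zero =>
      simp
  | succ m =>
      set ι := (EuclideanSpace.equiv (Fin (m+1)) ℝ).symm with hι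
      set e := (MeasurableEquiv.toLp 2 (Fin (m+1) → ℝ)).symm with he
      have hcoe : ∀ x : EuclideanSpace ℝ (Fin (m+1)), e x = (EuclideanSpace.equiv (Fin (m+1)) ℝ) x :=
        fun x => rfl
      have hιe : ∀ x : EuclideanSpace ℝ (Fin (m+1)), ι (e x) = x := fun x => by
        rw [hcoe]; exact (EuclideanSpace.equiv (Fin (m+1)) ℝ).symm_apply_apply x
      have hιapp : ∀ (y : Fin (m+1) → ℝ) (i : Fin (m+1)), (ι y) i = y i := fun y i => rfl
      have heapp : ∀ (x : EuclideanSpace ℝ (Fin (m+1))) (i : Fin (m+1)), e x i = x i :=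
        fun x i => by rw [hcoe]; rfl
      have hsingle : ∀ i : Fin (m+1), ι (Pi.single i 1) = EuclideanSpace.single i 1 := fun i => rfl
      have hab' : a ≤ b := fun i => (hab i).le
      have hK' : K = e ⁻¹' (Icc a b) := by
        rw [hK]; ext x
        simp only [mem_setOf_eq, mem_preimage, mem_Icc, Pi.le_def]
        constructor
        · intro h
          exact ⟨fun i => by rw [heapp]; exact (h i).1, fun i => by rw [heapp]; exact (h i).2⟩
        · intro h i
          refine ⟨?_, ?_⟩
          · have := h.1 i; rwa [heapp] at this
          · have := h.2 i; rwa [heapp] at this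
      have hΩ' : Ω = e ⁻¹' (Set.pi univ fun i => Ioo (a i) (b i)) := by
        rw [hΩ]; ext x
        simp only [mem_setOf_eq, mem_preimage, mem_pi, mem_univ, forall_true_left]
        constructor
        · intro h i
          rw [heapp]; exact h i
        · intro h i
          have := h i; rwa [heapp] at this
      have hvol : MeasurePreserving e volume volume :=
        EuclideanSpace.volume_preserving_symm_measurableEquiv_toLp (Fin (m+1))
      have hemb : MeasurableEmbedding e := e.measurableEmbedding
      -- K ⊆ U transfers
      have hIccU : ∀ y ∈ Icc a b, ι y ∈ U := by
        intro y hy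
        apply hKU
        rw [hK']
        simp only [mem_preimage]
        have : e (ι y) = y := by
          rw [hcoe]
          exact (EuclideanSpace.equiv (Fin (m+1)) ℝ).apply_symm_apply y
        rw [this]; exact hy
      -- apply divergence theorem in pi world
      have hdiv := integral_divergence_of_hasFDerivAt_off_countable' a b hab'
        (fun i y => φ i (ι y))
        (fun i y => (D i (ι y)).comp (ι.toContinuousLinearMap)) ∅ countable_empty
        (fun i => (hφc i).comp ι.continuousOn (fun y hy => hIccU y hy))
        (fun y hy i => by
          refine ((hφd i (ι y) ?_).comp y (ι.toContinuousLinearMap.hasFDerivAt)).congr_fderiv rfl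
          apply hIccU
          rw [← pi_univ_Icc]
          exact fun j _ => Ioo_subset_Icc_self (hy.1 j trivial))
        ?_
      · -- boundary terms vanish
        have hz : ∀ i : Fin (m+1), ∀ (c : ℝ), (c = a i ∨ c = b i) →
            ∀ y ∈ Icc (a ∘ i.succAbove) (b ∘ i.succAbove),
            φ i (ι (i.insertNth c y)) = 0 := by
          intro i c hc y hy
          apply hbd
          · rw [hK]
            intro j
            rcases eq_or_ne j i with rfl | hne
            · rw [hιapp, Fin.insertNth_apply_same]
              rcases hc with rfl | rfl
              · exact ⟨le_refl _, (hab j).le⟩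
              · exact ⟨(hab j).le, le_refl _⟩
            · rcases Fin.exists_succAbove_eq hne with ⟨k, rfl⟩
              rw [hιapp, Fin.insertNth_apply_succAbove]
              exact ⟨hy.1 k, hy.2 k⟩
          · rw [hιapp, Fin.insertNth_apply_same]; tauto
        have hface : ∀ i : Fin (m+1), ∀ (c : ℝ), (c = a i ∨ c = b i) →
            ∫ y in Icc (a ∘ i.succAbove) (b ∘ i.succAbove), φ i (ι (i.insertNth c y)) = 0 := by
          intro i c hc
          have : EqOn (fun y => φ i (ι (i.insertNth c y))) (fun _ => (0:ℝ))
              (Icc (a ∘ i.succAbove) (b ∘ i.succAbove)) := fun y hy => hz i c hc y hy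
          rw [setIntegral_congr_fun measurableSet_Icc this]
          simp
        have hLHS : (∫ y in Icc a b, ∑ i, ((D i (ι y)).comp (ι.toContinuousLinearMap)) (Pi.single i 1))
            = ∫ x in K, ∑ i, D i x (EuclideanSpace.single i 1) := by
          rw [hK', ← hvol.setIntegral_preimage_emb hemb]
          refine setIntegral_congr_fun (measurableSet_Icc.preimage e.measurable) ?_
          intro x _
          refine Finset.sum_congr rfl fun i _ => ?_
          simp only [ContinuousLinearMap.comp_apply]
          rw [hιe]
          rfl
        have hKΩ : (∫ x in Ω, ∑ i, D i x (EuclideanSpace.single i 1))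
            = ∫ x in K, ∑ i, D i x (EuclideanSpace.single i 1) := by
          refine setIntegral_congr_set ?_
          rw [hΩ', hK']
          refine hvol.quasiMeasurePreserving.preimage_ae_eq ?_
          rw [volume_pi]
          exact MeasureTheory.Measure.univ_pi_Ioo_ae_eq_Icc
        rw [hKΩ, ← hLHS]
        rw [show (∫ y in Icc a b, ∑ i, ((D i (ι y)).comp (ι.toContinuousLinearMap)) (Pi.single i 1))
          = ∑ i : Fin (m + 1),
            ((∫ y in Icc (a ∘ i.succAbove) (b ∘ i.succAbove), φ i (ι (i.insertNth (b i) y))) -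
              ∫ y in Icc (a ∘ i.succAbove) (b ∘ i.succAbove), φ i (ι (i.insertNth (a i) y)))
          from hdiv]
        refine Finset.sum_eq_zero fun i _ => ?_
        rw [hface i (b i) (Or.inr rfl), hface i (a i) (Or.inl rfl), sub_zero]
      · -- integrability
        apply ContinuousOn.integrableOn_compact isCompact_Icc
        have : ∀ y ∈ Icc a b, (∑ i, ((D i (ι y)).comp (ι.toContinuousLinearMap)) (Pi.single i 1))
            = ∑ i, D i (ι y) (EuclideanSpace.single i 1) := by
          intro y hy
          refine Finset.sum_congr rfl fun i _ => ?_
          simp only [ContinuousLinearMap.comp_apply]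
          rfl
        refine ContinuousOn.congr ?_ this
        refine continuousOn_finset_sum _ fun i _ => ?_
        exact (hDc i).comp ι.continuousOn (fun y hy => hIccU y hy)



/-- energy decay, Lemma 2.2, on a box with Neumann boundary conditions:
for a smooth solution of `c(|∇S|) ∂ₜS = α ΔS − β d'(S)` on the closed box `K` with
vanishing normal derivative on the faces, the energy `t ↦ E(S(t,·))` is differentiable with
derivative `−∫_Ω c(|∇S|)|∂ₜS|² dx ≤ 0`; in particular the energy is nonincreasing. -/
theorem energy_decay_neumann_box
    {n : ℕ} (a b : Fin n → ℝ) (hab : ∀ i, a i < b i)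
    (Ω : Set (EuclideanSpace ℝ (Fin n)))
    (hΩ : Ω = {x : EuclideanSpace ℝ (Fin n) | ∀ i, x i ∈ Ioo (a i) (b i)})
    (K : Set (EuclideanSpace ℝ (Fin n)))
    (hK : K = {x : EuclideanSpace ℝ (Fin n) | ∀ i, x i ∈ Icc (a i) (b i)})
    (α β : ℝ) (hα : 0 < α) (hβ : 0 < β)
    (c : ℝ → ℝ) (hc : Continuous c) (hcnn : ∀ x, 0 ≤ c x)
    (d : ℝ → ℝ) (hd : ContDiff ℝ 1 d)
    (U : Set (EuclideanSpace ℝ (Fin n))) (hU : IsOpen U) (hKU : K ⊆ U)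
    (S : ℝ → EuclideanSpace ℝ (Fin n) → ℝ)
    (hS : ContDiffOn ℝ 2 (fun p : ℝ × EuclideanSpace ℝ (Fin n) => S p.1 p.2)
      (Set.univ ×ˢ U))
    (hpde : ∀ t : ℝ, ∀ x ∈ K,
      c ‖gradient (S t) x‖ * deriv (fun s => S s x) t
        = α * laplacian (S t) x - β * deriv d (S t x))
    (hneumann : ∀ t : ℝ, ∀ x ∈ K, ∀ i : Fin n,
      (x i = a i ∨ x i = b i) → gradient (S t) x i = 0) :
    (∀ t : ℝ, HasDerivAt (fun s => energy Ω α β d (S s))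
        (-∫ x in Ω, c ‖gradient (S t) x‖ * (deriv (fun s => S s x) t) ^ 2) t ∧
      -∫ x in Ω, c ‖gradient (S t) x‖ * (deriv (fun s => S s x) t) ^ 2 ≤ 0) ∧
    Antitone (fun t => energy Ω α β d (S t)) := by
  -- ## Setup: the joint function and its first and second derivatives
  have hV : IsOpen ((Set.univ : Set ℝ) ×ˢ U) := isOpen_univ.prod hU
  set V : Set (ℝ × EuclideanSpace ℝ (Fin n)) := Set.univ ×ˢ U with hVdef
  set F : ℝ × EuclideanSpace ℝ (Fin n) → ℝ := fun p => S p.1 p.2 with hFdef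
  set Φ := fderiv ℝ F with hΦdef
  set Ψ := fderiv ℝ Φ with hΨdef
  have hmemV : ∀ (t : ℝ) (x : EuclideanSpace ℝ (Fin n)), x ∈ U → (t, x) ∈ V :=
    fun t x hx => ⟨mem_univ _, hx⟩
  have hΦ1 : ContDiffOn ℝ 1 Φ V := hS.fderiv_of_isOpen hV (by norm_num)
  have h1 : ∀ t, ∀ x ∈ U, HasFDerivAt F (Φ (t, x)) (t, x) := fun t x hx =>
    ((hS.differentiableOn (by norm_num)).differentiableAt (hV.mem_nhds (hmemV t x hx))).hasFDerivAt
  have h2 : ∀ t, ∀ x ∈ U, HasFDerivAt Φ (Ψ (t, x)) (t, x) := fun t x hx =>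
    ((hΦ1.differentiableOn (by norm_num)).differentiableAt (hV.mem_nhds (hmemV t x hx))).hasFDerivAt
  have hΦc : ContinuousOn Φ V := hΦ1.continuousOn
  have hΨ0 : ContDiffOn ℝ 0 Ψ V := hΦ1.fderiv_of_isOpen hV (by norm_num)
  have hΨc : ContinuousOn Ψ V := hΨ0.continuousOn
  have hsymm : ∀ t, ∀ x ∈ U, ∀ v w, Ψ (t, x) v w = Ψ (t, x) w v := by
    intro t x hx v w
    exact second_derivative_symmetric_of_eventually
      (Filter.eventually_of_mem (hV.mem_nhds (hmemV t x hx))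
        (fun p hp => h1 p.1 p.2 hp.2))
      (h2 t x hx) v w
  -- partial derivatives
  set u : ℝ → EuclideanSpace ℝ (Fin n) → ℝ := fun t x => Φ (t, x) (1, 0) with hudef
  set g : Fin n → ℝ → EuclideanSpace ℝ (Fin n) → ℝ :=
    fun i t x => Φ (t, x) (0, EuclideanSpace.single i 1) with hgdef
  have hud : ∀ t, ∀ x ∈ U, HasDerivAt (fun s => S s x) (u t x) t :=
    fun t x hx => auxL1 h1 t x hx
  have hderiv_eq : ∀ t, ∀ x ∈ U, deriv (fun s => S s x) t = u t x :=
    fun t x hx => (hud t x hx).deriv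
  have hgrad : ∀ t, ∀ x ∈ U, ∀ i, gradient (S t) x i = g i t x :=
    fun t x hx i => auxG1 h1 t x hx i
  have hlap : ∀ t, ∀ x ∈ U, laplacian (S t) x
      = ∑ i, Ψ (t, x) (0, EuclideanSpace.single i 1) (0, EuclideanSpace.single i 1) :=
    fun t x hx => auxG2 hU h1 h2 t x hx
  have hnorm : ∀ t, ∀ x ∈ U, ‖gradient (S t) x‖ ^ 2 = ∑ i, (g i t x) ^ 2 := by
    intro t x hx
    rw [auxNormSq]
    exact Finset.sum_congr rfl fun i _ => by rw [hgrad t x hx i]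
  -- ## Sets: compactness, measurability, finiteness
  have hΩK : Ω ⊆ K := by
    rw [hΩ, hK]; intro x hx i; exact Ioo_subset_Icc_self (hx i)
  have hΩU : Ω ⊆ U := fun x hx => hKU (hΩK hx)
  have hKcpt : IsCompact K := by
    have : K = (EuclideanSpace.equiv (Fin n) ℝ).symm '' (Icc a b) := by
      rw [hK]; ext x
      constructor
      · intro hx
        exact ⟨(EuclideanSpace.equiv (Fin n) ℝ) x,
          ⟨fun i => (hx i).1, fun i => (hx i).2⟩, by simp⟩
      · rintro ⟨y, hy, rfl⟩ i
        exact ⟨hy.1 i, hy.2 i⟩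
    rw [this]
    exact isCompact_Icc.image (EuclideanSpace.equiv (Fin n) ℝ).symm.continuous
  have hΩopen : IsOpen Ω := by
    rw [hΩ, show {x : EuclideanSpace ℝ (Fin n) | ∀ i, x i ∈ Ioo (a i) (b i)}
      = ⋂ i, (fun x : EuclideanSpace ℝ (Fin n) => x i) ⁻¹' (Ioo (a i) (b i)) from by
        ext x; simp]
    exact isOpen_iInter_of_finite fun i =>
      (isOpen_Ioo).preimage ((continuous_apply i).comp
        (EuclideanSpace.equiv (Fin n) ℝ).continuous)
  have hΩmeas : MeasurableSet Ω := hΩopen.measurableSet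
  have hΩfin : volume Ω < ⊤ :=
    lt_of_le_of_lt (measure_mono hΩK) hKcpt.measure_lt_top
  have intOn : ∀ f : EuclideanSpace ℝ (Fin n) → ℝ, ContinuousOn f U → IntegrableOn f Ω :=
    fun f hf => ((hf.mono hKU).integrableOn_compact hKcpt).mono_set hΩK
  -- slices of continuous functions
  have hslice : ∀ (f : ℝ × EuclideanSpace ℝ (Fin n) → ℝ), ContinuousOn f V →
      ∀ t, ContinuousOn (fun x => f (t, x)) U := fun f hf t =>
    hf.comp ((continuous_const.prodMk continuous_id).continuousOn)
      (fun x hx => hmemV t x hx)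
  -- continuity of derivative components on V
  have huc : ContinuousOn (fun p : ℝ × EuclideanSpace ℝ (Fin n) => Φ p (1, 0)) V :=
    hΦc.clm_apply continuousOn_const
  have hgc : ∀ i, ContinuousOn
      (fun p : ℝ × EuclideanSpace ℝ (Fin n) => Φ p (0, EuclideanSpace.single i 1)) V :=
    fun i => hΦc.clm_apply continuousOn_const
  have hΨv : ∀ v w : ℝ × EuclideanSpace ℝ (Fin n),
      ContinuousOn (fun p => Ψ p v w) V :=
    fun v w => (hΨc.clm_apply continuousOn_const).clm_apply continuousOn_const
  have hSc : ContinuousOn F V := hS.continuousOn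
  -- ## the t-derivative of the integrand
  set G : ℝ → EuclideanSpace ℝ (Fin n) → ℝ := fun t x =>
    α * ∑ i, g i t x * Ψ (t, x) (1, 0) (0, EuclideanSpace.single i 1)
      + β * (deriv d (S t x) * u t x) with hGdef
  have hEd : ∀ s : ℝ, ∀ x ∈ U, HasDerivAt
      (fun r => α / 2 * ‖gradient (S r) x‖ ^ 2 + β * d (S r x)) (G s x) s := by
    intro s x hx
    have hfun : (fun r => α / 2 * ‖gradient (S r) x‖ ^ 2 + β * d (S r x))
        = (fun r => α / 2 * ∑ i, (g i r x) ^ 2 + β * d (S r x)) := by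
      funext r; rw [hnorm r x hx]
    rw [hfun]
    have hsum : HasDerivAt (fun r => ∑ i, (g i r x) ^ 2)
        (∑ i, 2 * g i s x * Ψ (s, x) (1, 0) (0, EuclideanSpace.single i 1)) s := by
      refine HasDerivAt.fun_sum fun i _ => ?_
      have := (auxL4 h2 s x hx (0, EuclideanSpace.single i 1)).fun_pow 2
      simpa [pow_one, hgdef] using this
    have hd2 : HasDerivAt (fun r => d (S r x)) (deriv d (S s x) * u s x) s := by
      have hdd : HasDerivAt d (deriv d (S s x)) (S s x) :=
        ((hd.differentiable one_ne_zero) (S s x)).hasDerivAt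
      exact hdd.comp s (hud s x hx)
    have := ((hsum.const_mul (α / 2)).add (hd2.const_mul β))
    refine this.congr_deriv ?_
    rw [hGdef]
    simp only []
    rw [Finset.mul_sum, Finset.mul_sum]
    congr 1
    exact Finset.sum_congr rfl fun i _ => by ring
  have hGc : ContinuousOn (fun p : ℝ × EuclideanSpace ℝ (Fin n) => G p.1 p.2) V := by
    have : (fun p : ℝ × EuclideanSpace ℝ (Fin n) => G p.1 p.2)
        = fun p => α * ∑ i, Φ p (0, EuclideanSpace.single i 1) * Ψ p (1, 0) (0, EuclideanSpace.single i 1)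
            + β * (deriv d (F p) * Φ p (1, 0)) := rfl
    rw [this]
    refine (continuousOn_const.mul (continuousOn_finset_sum _ fun i _ =>
      (hgc i).mul (hΨv _ _))).add (continuousOn_const.mul
        ((((hd.continuous_deriv le_rfl).comp_continuousOn hSc)).mul huc))
  -- continuity of the integrand in p, for measurability
  have hIc : ∀ s : ℝ, ContinuousOn
      (fun x => α / 2 * ‖gradient (S s) x‖ ^ 2 + β * d (S s x)) U := by
    intro s
    have h1' : ContinuousOn (fun x => α / 2 * ∑ i, (g i s x) ^ 2 + β * d (S s x)) U := by
      refine (continuousOn_const.mul (continuousOn_finset_sum _ fun i _ => ?_)).add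
        (continuousOn_const.mul ((hd.continuous.comp_continuousOn
          (hslice F hSc s))))
      exact ((hslice _ (hgc i) s)).pow 2
    refine ContinuousOn.congr h1' ?_
    intro x hx
    show α / 2 * ‖gradient (S s) x‖ ^ 2 + β * d (S s x)
      = α / 2 * ∑ i, (g i s x) ^ 2 + β * d (S s x)
    rw [hnorm s x hx]
  -- ## differentiation under the integral sign
  have hkey : ∀ t₀ : ℝ, HasDerivAt (fun s => energy Ω α β d (S s)) (∫ x in Ω, G t₀ x) t₀ := by
    intro t₀
    have hJcpt : IsCompact ((Icc (t₀ - 1) (t₀ + 1)) ×ˢ K) := isCompact_Icc.prod hKcpt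
    have hJV : ((Icc (t₀ - 1) (t₀ + 1)) ×ˢ K) ⊆ V := fun p hp => ⟨mem_univ _, hKU hp.2⟩
    obtain ⟨M, hM⟩ := hJcpt.exists_bound_of_continuousOn (hGc.mono hJV)
    have hmeas1 : ∀ s : ℝ, AEStronglyMeasurable
        (fun x => α / 2 * ‖gradient (S s) x‖ ^ 2 + β * d (S s x)) (volume.restrict Ω) :=
      fun s => ((hIc s).mono hΩU).aestronglyMeasurable hΩmeas
    have hint1 : Integrable (fun x => α / 2 * ‖gradient (S t₀) x‖ ^ 2 + β * d (S t₀ x))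
        (volume.restrict Ω) := intOn _ (hIc t₀)
    have hmeas2 : AEStronglyMeasurable (fun x => G t₀ x) (volume.restrict Ω) :=
      ((hslice _ hGc t₀).mono hΩU).aestronglyMeasurable hΩmeas
    have hbound : ∀ᵐ x ∂(volume.restrict Ω), ∀ s ∈ Metric.ball t₀ 1, ‖G s x‖ ≤ M := by
      filter_upwards [ae_restrict_mem hΩmeas] with x hx s hs
      refine hM (s, x) ⟨?_, hΩK hx⟩
      rw [Real.ball_eq_Ioo] at hs
      exact Ioo_subset_Icc_self hs
    have hdiff : ∀ᵐ x ∂(volume.restrict Ω), ∀ s ∈ Metric.ball t₀ 1,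
        HasDerivAt (fun r => α / 2 * ‖gradient (S r) x‖ ^ 2 + β * d (S r x)) (G s x) s := by
      filter_upwards [ae_restrict_mem hΩmeas] with x hx s _
      exact hEd s x (hΩU hx)
    have key := hasDerivAt_integral_of_dominated_loc_of_deriv_le (Metric.ball_mem_nhds t₀ one_pos)
      (Filter.Eventually.of_forall hmeas1) hint1 hmeas2 hbound (integrableOn_const hΩfin.ne) hdiff
    exact key.2
  -- ## the divergence-theorem identity
  have hmain : ∀ t₀ : ℝ, (∫ x in Ω, G t₀ x)
      = -∫ x in Ω, c ‖gradient (S t₀) x‖ * (deriv (fun s => S s x) t₀) ^ 2 := by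
    intro t₀
    -- vector field and its derivative
    set Du : EuclideanSpace ℝ (Fin n) → EuclideanSpace ℝ (Fin n) →L[ℝ] ℝ :=
      fun x => ((Ψ (t₀, x)).flip (1, 0)).comp (zprodAux n) with hDudef
    set Dg : Fin n → EuclideanSpace ℝ (Fin n) → EuclideanSpace ℝ (Fin n) →L[ℝ] ℝ :=
      fun i x => ((Ψ (t₀, x)).flip (0, EuclideanSpace.single i 1)).comp (zprodAux n) with hDgdef
    have hDu : ∀ x ∈ U, HasFDerivAt (u t₀) (Du x) x := by
      intro x hx
      have h := (auxL3 h2 t₀ x hx).clm_apply (hasFDerivAt_const ((1 : ℝ), (0 : EuclideanSpace ℝ (Fin n))) x)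
      refine h.congr_fderiv ?_
      ext w
      simp [zprodAux, hDudef, ContinuousLinearMap.comp_apply, ContinuousLinearMap.flip_apply,
        ContinuousLinearMap.add_apply, ContinuousLinearMap.zero_apply]
    have hDg : ∀ i, ∀ x ∈ U, HasFDerivAt (g i t₀) (Dg i x) x := by
      intro i x hx
      have h := (auxL3 h2 t₀ x hx).clm_apply
        (hasFDerivAt_const ((0 : ℝ), EuclideanSpace.single i (1 : ℝ)) x)
      refine h.congr_fderiv ?_
      ext w
      simp [zprodAux, hDgdef, hgdef, ContinuousLinearMap.comp_apply, ContinuousLinearMap.flip_apply,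
        ContinuousLinearMap.add_apply, ContinuousLinearMap.zero_apply]
    set D : Fin n → EuclideanSpace ℝ (Fin n) → EuclideanSpace ℝ (Fin n) →L[ℝ] ℝ :=
      fun i x => u t₀ x • Dg i x + g i t₀ x • Du x with hDdef
    have hφd : ∀ i, ∀ x ∈ U, HasFDerivAt (fun y => u t₀ y * g i t₀ y) (D i x) x :=
      fun i x hx => (hDu x hx).mul (hDg i x hx)
    have hDeval : ∀ i, ∀ x : EuclideanSpace ℝ (Fin n), D i x (EuclideanSpace.single i 1)
        = u t₀ x * Ψ (t₀, x) (0, EuclideanSpace.single i 1) (0, EuclideanSpace.single i 1)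
          + g i t₀ x * Ψ (t₀, x) (0, EuclideanSpace.single i 1) (1, 0) := by
      intro i x
      simp [hDdef, hDudef, hDgdef, zprodAux]
    have hdiv := div_box a b hab Ω hΩ K hK U hU hKU
      (fun i x => u t₀ x * g i t₀ x) D
      (fun i => (hslice _ huc t₀).mul (hslice _ (hgc i) t₀))
      hφd
      (fun i => by
        refine ContinuousOn.congr ?_ (fun x _ => (hDeval i x))
        exact ((hslice _ huc t₀).mul (hslice _ (hΨv _ _) t₀)).add
          ((hslice _ (hgc i) t₀).mul (hslice _ (hΨv _ _) t₀)))
      (fun x hxK i hxi => by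
        show u t₀ x * g i t₀ x = 0
        rw [← hgrad t₀ x (hKU hxK) i, hneumann t₀ x hxK i hxi, mul_zero])
    -- rewrite the divergence integrand
    set X : EuclideanSpace ℝ (Fin n) → ℝ :=
      fun x => ∑ i, g i t₀ x * Ψ (t₀, x) (1, 0) (0, EuclideanSpace.single i 1) with hXdef
    set L : EuclideanSpace ℝ (Fin n) → ℝ := fun x => laplacian (S t₀) x with hLdef
    have hXc : ContinuousOn X U := continuousOn_finset_sum _ fun i _ =>
      (hslice _ (hgc i) t₀).mul (hslice _ (hΨv _ _) t₀)
    have hLc : ContinuousOn L U := by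
      refine ContinuousOn.congr (continuousOn_finset_sum _ fun i (_ : i ∈ Finset.univ) =>
        (hslice _ (hΨv (0, EuclideanSpace.single i 1) (0, EuclideanSpace.single i 1)) t₀)) ?_
      intro x hx
      exact hlap t₀ x hx
    have huc' : ContinuousOn (u t₀) U := hslice _ huc t₀
    have hdiv' : ∫ x in Ω, (u t₀ x * L x + X x) = 0 := by
      rw [← hdiv]
      refine setIntegral_congr_fun hΩmeas ?_
      intro x hx
      show u t₀ x * L x + X x = ∑ i, D i x (EuclideanSpace.single i 1)
      rw [Finset.sum_congr rfl fun i (_ : i ∈ Finset.univ) => hDeval i x]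
      rw [Finset.sum_add_distrib, ← Finset.mul_sum]
      simp only [hLdef, hXdef]
      rw [hlap t₀ x (hΩU hx)]
      congr 1
      refine Finset.sum_congr rfl fun i _ => ?_
      rw [hsymm t₀ x (hΩU hx)]
    have hiX : IntegrableOn X Ω := intOn X hXc
    have hiUL : IntegrableOn (fun x => u t₀ x * L x) Ω := intOn _ (huc'.mul hLc)
    have hXeq : ∫ x in Ω, X x = -∫ x in Ω, u t₀ x * L x := by
      have := integral_add hiUL hiX
      rw [hdiv'] at this
      linarith [this]
    -- identify ∫ G with the claimed value
    set Y : EuclideanSpace ℝ (Fin n) → ℝ := fun x => deriv d (S t₀ x) * u t₀ x with hYdef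
    have hYc : ContinuousOn Y U :=
      (((hd.continuous_deriv le_rfl).comp_continuousOn (hslice F hSc t₀))).mul huc'
    set W : EuclideanSpace ℝ (Fin n) → ℝ :=
      fun x => β * Y x - α * (u t₀ x * L x) with hWdef
    have hiG : IntegrableOn (fun x => G t₀ x) Ω := intOn _ (hslice _ hGc t₀)
    have hiW : IntegrableOn W Ω :=
      ((intOn Y hYc).const_mul β).sub (hiUL.const_mul α)
    have hGW : ∫ x in Ω, G t₀ x = ∫ x in Ω, W x := by
      have hsub : ∫ x in Ω, (G t₀ x - W x) = (∫ x in Ω, G t₀ x) - ∫ x in Ω, W x :=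
        integral_sub hiG hiW
      have hzero : ∫ x in Ω, (G t₀ x - W x) = 0 := by
        have heq : ∀ x ∈ Ω, G t₀ x - W x = α * (u t₀ x * L x + X x) := by
          intro x hx
          simp only [hGdef, hWdef, hYdef, hXdef, hLdef]
          ring
        rw [setIntegral_congr_fun hΩmeas heq, integral_const_mul, hdiv', mul_zero]
      rw [hzero] at hsub
      linarith [hsub]
    have hWfinal : ∫ x in Ω, W x
        = -∫ x in Ω, c ‖gradient (S t₀) x‖ * (deriv (fun s => S s x) t₀) ^ 2 := by
      rw [← integral_neg]
      refine setIntegral_congr_fun hΩmeas ?_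
      intro x hx
      have hp := hpde t₀ x (hΩK hx)
      rw [hderiv_eq t₀ x (hΩU hx)] at hp
      show W x = -(c ‖gradient (S t₀) x‖ * (deriv (fun s => S s x) t₀) ^ 2)
      rw [hderiv_eq t₀ x (hΩU hx)]
      simp only [hWdef, hYdef, hLdef]
      linear_combination (u t₀ x) * hp
    rw [hGW, hWfinal]
  -- ## conclusion
  have hnn : ∀ t : ℝ,
      -∫ x in Ω, c ‖gradient (S t) x‖ * (deriv (fun s => S s x) t) ^ 2 ≤ 0 := by
    intro t
    refine neg_nonpos.2 (setIntegral_nonneg hΩmeas fun x _ => ?_)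
    exact mul_nonneg (hcnn _) (sq_nonneg _)
  have hHD : ∀ t : ℝ, HasDerivAt (fun s => energy Ω α β d (S s))
      (-∫ x in Ω, c ‖gradient (S t) x‖ * (deriv (fun s => S s x) t) ^ 2) t := by
    intro t
    have := hkey t
    rwa [hmain t] at this
  refine ⟨fun t => ⟨hHD t, hnn t⟩, ?_⟩
  refine antitone_of_deriv_nonpos (fun t => (hHD t).differentiableAt) (fun t => ?_)
  rw [(hHD t).deriv]
  exact hnn t
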